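/- arXiv:1201.5146 — 2 statements merged into one kernel-verified Lean document; each statement's English description precedes it below -/
import Mathlib

section
/- Let ω be a Dini function (a continuous increasing function on [0,∞) with ω(0)=0 and ∫₀ᵗ ω(s)/s ds < ∞ for all t>0). For constants a ∈ (0,1) and b > 1, define ω̃(t) = Σ_{k=0}^∞ a^k (ω(b^k t)·1_{b^k t ≤ 1} + ω(1)·1_{b^k t > 1}). Then ω̃ is also a Dini function, i.e., ω̃ is continuous, increasing, ω̃(0)=0, and ∫₀ᵗ ω̃(s)/s ds < ∞ for all t > 0. -/
open MeasureTheory Set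

/-- A Dini function: continuous and increasing on `[0,∞)`, vanishing at `0`,
nonnegative, with `∫₀ᵗ ω(s)/s ds < ∞` for every `t > 0`. -/
def IsDini (ω : ℝ → ℝ) : Prop :=
  ContinuousOn ω (Ici 0) ∧ MonotoneOn ω (Ici 0) ∧ ω 0 = 0 ∧
  (∀ s ∈ Ici (0:ℝ), 0 ≤ ω s) ∧
  ∀ t > (0:ℝ), IntegrableOn (fun s => ω s / s) (Ioc 0 t)


lemma aux_int (ω : ℝ → ℝ) (hcont : ContinuousOn ω (Ici 0))
    (hmono : MonotoneOn ω (Ici 0)) (h0 : ω 0 = 0)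
    (hnn : ∀ s ∈ Ici (0:ℝ), 0 ≤ ω s)
    (hint : ∀ t > (0:ℝ), IntegrableOn (fun s => ω s / s) (Ioc 0 t))
    {c t : ℝ} (hc : 1 ≤ c) (ht : 0 < t) :
    IntegrableOn (fun s => ω (min (c * s) 1) / s) (Ioc 0 t) ∧
      ∫ s in Ioc 0 t, ω (min (c * s) 1) / s ≤
        (∫ u in Ioc 0 1, ω u / u) + ω 1 * (|Real.log t| + Real.log c) := by
  have hc0 : (0:ℝ) < c := lt_of_lt_of_le one_pos hc
  set m : ℝ := min t (1/c) with hm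
  have hm0 : 0 < m := lt_min ht (by positivity)
  have hmt : m ≤ t := min_le_left _ _
  have hcm1 : c * m ≤ 1 := by
    calc c * m ≤ c * (1/c) := by
          exact mul_le_mul_of_nonneg_left (min_le_right _ _) hc0.le
    _ = 1 := by field_simp
  have hcm0 : 0 < c * m := by positivity
  -- piece 1 : on (0, m]
  have i1 : IntervalIntegrable (fun u => ω u / u) volume 0 (c * m) :=
    (intervalIntegrable_iff_integrableOn_Ioc_of_le hcm0.le).2 (hint _ hcm0)
  have i2 : IntervalIntegrable (fun s => ω (c * s) / (c * s)) volume 0 m := by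
    have h := i1.comp_mul_left (c := c)
    rw [zero_div, mul_div_cancel_left₀ _ (ne_of_gt hc0)] at h
    exact h
  have i3 : IntervalIntegrable (fun s => c * (ω (c * s) / (c * s))) volume 0 m :=
    by simpa [mul_comm] using i2.mul_const c
  have e1 : EqOn (fun s => c * (ω (c * s) / (c * s))) (fun s => ω (min (c * s) 1) / s)
      (Ioc 0 m) := by
    intro s hs
    have h1 : c * s ≤ 1 := le_trans (mul_le_mul_of_nonneg_left hs.2 hc0.le) hcm1
    show c * (ω (c * s) / (c * s)) = ω (min (c * s) 1) / s
    rw [min_eq_left h1, ← mul_div_assoc, mul_div_mul_left _ _ (ne_of_gt hc0)]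
  have p1int : IntegrableOn (fun s => ω (min (c * s) 1) / s) (Ioc 0 m) :=
    ((intervalIntegrable_iff_integrableOn_Ioc_of_le hm0.le).1 i3).congr_fun e1 measurableSet_Ioc
  have v1 : ∫ s in Ioc 0 m, ω (min (c * s) 1) / s ≤ ∫ u in Ioc 0 1, ω u / u := by
    have e2 : EqOn (fun s => ω (min (c * s) 1) / s) (fun s => c * (ω (c * s) / (c * s)))
        (uIcc 0 m) := by
      intro s hs
      rcases eq_or_ne s 0 with rfl | hs0
      · show ω (min (c * 0) 1) / 0 = c * (ω (c * 0) / (c * 0))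
        simp [h0]
      · rw [uIcc_of_le hm0.le] at hs
        exact (e1 ⟨lt_of_le_of_ne hs.1 (Ne.symm hs0), hs.2⟩).symm
    have hsub := intervalIntegral.mul_integral_comp_mul_left (a := 0) (b := m) (c := c)
      (f := fun u => ω u / u)
    have heq : ∫ s in Ioc 0 m, ω (min (c * s) 1) / s = ∫ u in Ioc 0 (c * m), ω u / u := by
      rw [← intervalIntegral.integral_of_le hm0.le, intervalIntegral.integral_congr e2,
        intervalIntegral.integral_const_mul, hsub, mul_zero,
        intervalIntegral.integral_of_le hcm0.le]
    rw [heq]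
    refine setIntegral_mono_set (hint 1 one_pos) ?_ ?_
    · refine (ae_restrict_iff' measurableSet_Ioc).2 (ae_of_all _ fun u hu => ?_)
      exact div_nonneg (hnn u hu.1.le) hu.1.le
    · exact HasSubset.Subset.eventuallyLE (Ioc_subset_Ioc_right hcm1)
  -- piece 2 : on (m, t]
  have hcont2 : ContinuousOn (fun s => ω (min (c * s) 1) / s) (Icc m t) := by
    apply ContinuousOn.div
    · refine hcont.comp (Continuous.continuousOn (by continuity)) fun s hs => ?_
      exact le_min (mul_nonneg hc0.le (le_trans hm0.le hs.1)) zero_le_one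
    · exact continuousOn_id
    · exact fun s hs => ne_of_gt (lt_of_lt_of_le hm0 hs.1)
  have p2int : IntegrableOn (fun s => ω (min (c * s) 1) / s) (Ioc m t) :=
    (hcont2.integrableOn_Icc).mono_set Ioc_subset_Icc_self
  have hcont3 : ContinuousOn (fun s : ℝ => ω 1 / s) (Icc m t) := by
    apply ContinuousOn.div continuousOn_const continuousOn_id
    exact fun s hs => ne_of_gt (lt_of_lt_of_le hm0 hs.1)
  have q2int : IntegrableOn (fun s : ℝ => ω 1 / s) (Ioc m t) :=
    (hcont3.integrableOn_Icc).mono_set Ioc_subset_Icc_self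
  have v2 : ∫ s in Ioc m t, ω (min (c * s) 1) / s ≤ ω 1 * (|Real.log t| + Real.log c) := by
    have step1 : ∫ s in Ioc m t, ω (min (c * s) 1) / s ≤ ∫ s in Ioc m t, ω 1 / s := by
      refine setIntegral_mono_on p2int q2int measurableSet_Ioc fun s hs => ?_
      have hs0 : 0 < s := lt_trans hm0 hs.1
      gcongr
      exact hmono (le_min (mul_nonneg hc0.le hs0.le) zero_le_one)
        (mem_Ici.2 zero_le_one) (min_le_right _ _)
    have step2 : ∫ s in Ioc m t, ω 1 / s = ω 1 * (Real.log t - Real.log m) := by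
      rw [← intervalIntegral.integral_of_le hmt]
      simp_rw [div_eq_mul_inv]
      rw [intervalIntegral.integral_const_mul, integral_inv_of_pos hm0 (lt_of_lt_of_le hm0 hmt),
        Real.log_div (ne_of_gt (lt_of_lt_of_le hm0 hmt)) (ne_of_gt hm0)]
    have step3 : Real.log t - Real.log m ≤ |Real.log t| + Real.log c := by
      rcases min_choice t (1/c) with h | h
      · rw [hm, h]
        have h1 : (0:ℝ) ≤ Real.log c := Real.log_nonneg hc
        have h2 := abs_nonneg (Real.log t)
        linarith
      · rw [hm, h, one_div, Real.log_inv]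
        have h1 := le_abs_self (Real.log t)
        linarith
    calc ∫ s in Ioc m t, ω (min (c * s) 1) / s ≤ ∫ s in Ioc m t, ω 1 / s := step1
      _ = ω 1 * (Real.log t - Real.log m) := step2
      _ ≤ ω 1 * (|Real.log t| + Real.log c) :=
          mul_le_mul_of_nonneg_left step3 (hnn 1 (mem_Ici.2 zero_le_one))
  constructor
  · rw [← Ioc_union_Ioc_eq_Ioc hm0.le hmt]; exact p1int.union p2int
  · rw [← Ioc_union_Ioc_eq_Ioc hm0.le hmt,
      setIntegral_union (Ioc_disjoint_Ioc_of_le le_rfl) measurableSet_Ioc p1int p2int]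
    exact add_le_add v1 v2

theorem stmt0 (ω : ℝ → ℝ) (hω : IsDini ω) (a b : ℝ) (ha : a ∈ Ioo (0:ℝ) 1)
    (hb : 1 < b) (ω' : ℝ → ℝ)
    (hω' : ∀ t, ω' t = ∑' k : ℕ, a ^ k *
      (if b ^ k * t ≤ 1 then ω (b ^ k * t) else ω 1)) :
    IsDini ω' := by
  obtain ⟨hcont, hmono, h0, hnn, hint⟩ := hω
  obtain ⟨ha0, ha1⟩ := ha
  have hb0 : (0:ℝ) < b := lt_trans one_pos hb
  have hω1 : 0 ≤ ω 1 := hnn 1 (mem_Ici.2 zero_le_one)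
  set F : ℕ → ℝ → ℝ := fun k t => a ^ k * ω (min (b ^ k * t) 1) with hF
  have hω'' : ∀ t, ω' t = ∑' k, F k t := by
    intro t; rw [hω' t]
    congr 1; funext k; congr 1
    split_ifs with h
    · rw [min_eq_left h]
    · rw [min_eq_right (le_of_lt (lt_of_not_ge h))]
  have hminmem : ∀ (k : ℕ) (t : ℝ), 0 ≤ t → min (b ^ k * t) 1 ∈ Ici (0:ℝ) := by
    intro k t ht
    exact mem_Ici.2 (le_min (mul_nonneg (pow_nonneg hb0.le k) ht) zero_le_one)
  have hFnn : ∀ (k : ℕ) (t : ℝ), 0 ≤ t → 0 ≤ F k t := fun k t ht =>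
    mul_nonneg (pow_nonneg ha0.le k) (hnn _ (hminmem k t ht))
  have hFle : ∀ (k : ℕ) (t : ℝ), 0 ≤ t → F k t ≤ a ^ k * ω 1 := fun k t ht =>
    mul_le_mul_of_nonneg_left
      (hmono (hminmem k t ht) (mem_Ici.2 zero_le_one) (min_le_right _ _))
      (pow_nonneg ha0.le k)
  have hsum_geom : Summable (fun k : ℕ => a ^ k * ω 1) :=
    (summable_geometric_of_lt_one ha0.le ha1).mul_right _
  have hFsum : ∀ t : ℝ, 0 ≤ t → Summable (fun k => F k t) := fun t ht =>
    Summable.of_nonneg_of_le (fun k => hFnn k t ht) (fun k => hFle k t ht) hsum_geom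
  have hFcont : ∀ k : ℕ, ContinuousOn (F k) (Ici 0) := by
    intro k
    apply continuousOn_const.mul
    refine hcont.comp (Continuous.continuousOn (by continuity)) fun t ht => hminmem k t ht
  have hcont' : ContinuousOn ω' (Ici 0) := by
    have h1 : ContinuousOn (fun t => ∑' k, F k t) (Ici 0) := by
      refine continuousOn_tsum hFcont hsum_geom fun k t ht => ?_
      rw [Real.norm_eq_abs, abs_of_nonneg (hFnn k t ht)]
      exact hFle k t ht
    exact h1.congr fun t _ => hω'' t
  have hmono' : MonotoneOn ω' (Ici 0) := by
    intro x hx y hy hxy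
    rw [hω'' x, hω'' y]
    refine Summable.tsum_le_tsum (fun k => ?_) (hFsum x hx) (hFsum y hy)
    refine mul_le_mul_of_nonneg_left
      (hmono (hminmem k x hx) (hminmem k y hy) ?_) (pow_nonneg ha0.le k)
    exact min_le_min (mul_le_mul_of_nonneg_left hxy (pow_nonneg hb0.le k)) le_rfl
  have h0' : ω' 0 = 0 := by
    rw [hω'' 0]
    have : ∀ k : ℕ, F k 0 = 0 := by
      intro k
      simp only [hF, mul_zero, min_eq_left zero_le_one, h0]
    simp only [this, tsum_zero]
  have hnn' : ∀ s ∈ Ici (0:ℝ), 0 ≤ ω' s := fun s hs =>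
    (hω'' s) ▸ tsum_nonneg fun k => hFnn k s hs
  refine ⟨hcont', hmono', h0', hnn', ?_⟩
  intro t ht
  set I1 := ∫ u in Ioc 0 1, ω u / u with hI1
  have hI1nn : 0 ≤ I1 :=
    setIntegral_nonneg measurableSet_Ioc fun u hu => div_nonneg (hnn u hu.1.le) hu.1.le
  have hlogb : 0 ≤ Real.log b := Real.log_nonneg hb.le
  have hck : ∀ k : ℕ, (1:ℝ) ≤ b ^ k := fun k => one_le_pow₀ hb.le
  set B : ℕ → ℝ := fun k => a ^ k * (I1 + ω 1 * (|Real.log t| + (k : ℝ) * Real.log b)) with hB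
  have hBnn : ∀ k, 0 ≤ B k := by
    intro k
    apply mul_nonneg (pow_nonneg ha0.le k)
    have : 0 ≤ (k : ℝ) * Real.log b := mul_nonneg (Nat.cast_nonneg k) hlogb
    have h2 := abs_nonneg (Real.log t)
    nlinarith
  have hBsum : Summable B := by
    have h1 : Summable (fun k : ℕ => (I1 + ω 1 * |Real.log t|) * a ^ k) :=
      (summable_geometric_of_lt_one ha0.le ha1).mul_left _
    have h2 : Summable (fun k : ℕ => (ω 1 * Real.log b) * ((k : ℝ) * a ^ k)) := by
      have h3 := summable_pow_mul_geometric_of_norm_lt_one 1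
        (r := a) (by rwa [Real.norm_eq_abs, abs_of_pos ha0])
      simpa [pow_one] using h3.mul_left (ω 1 * Real.log b)
    refine (h1.add h2).congr fun k => ?_
    simp only [hB]; ring
  -- measurability
  have hGcont : ContinuousOn (fun s => ω' s / s) (Ioc 0 t) := by
    apply ContinuousOn.div (hcont'.mono fun s hs => hs.1.le) continuousOn_id
    exact fun s hs => ne_of_gt hs.1
  have hmeas : AEStronglyMeasurable (fun s => ω' s / s) (volume.restrict (Ioc 0 t)) :=
    hGcont.aestronglyMeasurable measurableSet_Ioc
  refine ⟨hmeas, ?_⟩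
  rw [hasFiniteIntegral_iff_ofReal ((ae_restrict_iff' measurableSet_Ioc).2
    (ae_of_all _ fun s hs => div_nonneg (hnn' s hs.1.le) hs.1.le))]
  have key : ∀ s ∈ Ioc (0:ℝ) t,
      ENNReal.ofReal (ω' s / s) = ∑' k, ENNReal.ofReal (F k s / s) := by
    intro s hs
    rw [hω'' s, tsum_div_const.symm]
    exact ENNReal.ofReal_tsum_of_nonneg
      (fun k => div_nonneg (hFnn k s hs.1.le) hs.1.le) ((hFsum s hs.1.le).div_const s)
  have hmeas_k : ∀ k : ℕ, AEMeasurable (fun s => ENNReal.ofReal (F k s / s))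
      (volume.restrict (Ioc 0 t)) := by
    intro k
    have hc2 : ContinuousOn (fun s => F k s / s) (Ioc 0 t) := by
      apply ContinuousOn.div ((hFcont k).mono fun s hs => hs.1.le) continuousOn_id
      exact fun s hs => ne_of_gt hs.1
    exact ENNReal.measurable_ofReal.comp_aemeasurable
      (hc2.aemeasurable measurableSet_Ioc)
  have bound_k : ∀ k : ℕ, ∫⁻ s in Ioc 0 t, ENNReal.ofReal (F k s / s) ≤
      ENNReal.ofReal (B k) := by
    intro k
    obtain ⟨hik, hvk⟩ := aux_int ω hcont hmono h0 hnn hint (hck k) ht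
    have hnn_ae : 0 ≤ᵐ[volume.restrict (Ioc 0 t)] fun s => ω (min (b ^ k * s) 1) / s :=
      (ae_restrict_iff' measurableSet_Ioc).2 (ae_of_all _ fun s hs =>
        div_nonneg (hnn _ (hminmem k s hs.1.le)) hs.1.le)
    calc ∫⁻ s in Ioc 0 t, ENNReal.ofReal (F k s / s)
        = ∫⁻ s in Ioc 0 t, ENNReal.ofReal (a ^ k) *
            ENNReal.ofReal (ω (min (b ^ k * s) 1) / s) := by
          refine lintegral_congr fun s => ?_
          rw [← ENNReal.ofReal_mul (pow_nonneg ha0.le k)]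
          congr 1
          simp only [hF]; ring
      _ = ENNReal.ofReal (a ^ k) *
            ∫⁻ s in Ioc 0 t, ENNReal.ofReal (ω (min (b ^ k * s) 1) / s) :=
          lintegral_const_mul' _ _ ENNReal.ofReal_ne_top
      _ = ENNReal.ofReal (a ^ k) *
            ENNReal.ofReal (∫ s in Ioc 0 t, ω (min (b ^ k * s) 1) / s) := by
          rw [← ofReal_integral_eq_lintegral_ofReal hik hnn_ae]
      _ ≤ ENNReal.ofReal (a ^ k) *
            ENNReal.ofReal (I1 + ω 1 * (|Real.log t| + Real.log (b ^ k))) := by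
          gcongr
      _ = ENNReal.ofReal (B k) := by
          rw [← ENNReal.ofReal_mul (pow_nonneg ha0.le k)]
          congr 2
          rw [Real.log_pow]
  calc ∫⁻ s in Ioc 0 t, ENNReal.ofReal (ω' s / s)
      = ∫⁻ s in Ioc 0 t, ∑' k, ENNReal.ofReal (F k s / s) :=
        setLIntegral_congr_fun_ae measurableSet_Ioc (ae_of_all _ key)
    _ = ∑' k, ∫⁻ s in Ioc 0 t, ENNReal.ofReal (F k s / s) := lintegral_tsum hmeas_k
    _ ≤ ∑' k, ENNReal.ofReal (B k) := ENNReal.tsum_le_tsum bound_k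
    _ = ENNReal.ofReal (∑' k, B k) := (ENNReal.ofReal_tsum_of_nonneg hBnn hBsum).symm
    _ < ⊤ := ENNReal.ofReal_lt_top
end

section
/- Let a ∈ (0,1) and b > 1 with a·b > 1, and let ω be a bounded increasing function on [0,∞) with ω(0) = 0 and ∫₀¹ ω(s)/s ds < ∞. Then the function t ↦ Σ_{k=0}^∞ a^k ω(min(b^k t, 1)) satisfies ∫₀¹ [Σ_{k=0}^∞ a^k ω(min(b^k s, 1))]/s ds < ∞. -/
open MeasureTheory Set

lemma core9 (b : ℝ) (hb : 1 < b) (ω' : ℝ → ℝ) (hmono : Monotone ω') (hnn : ∀ t, 0 ≤ ω' t)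
    (hint : IntegrableOn (fun s => ω' s / s) (Ioc 0 1)) (k : ℕ) :
    IntegrableOn (fun s => ω' (min (b ^ k * s) 1) / s) (Ioc 0 1) ∧
    ∫ s in Ioc (0:ℝ) 1, ω' (min (b ^ k * s) 1) / s ≤
      (∫ s in Ioc (0:ℝ) 1, ω' s / s) + ω' 1 * (k * Real.log b) := by
  have hb0 : (0:ℝ) < b := lt_trans one_pos hb
  set c : ℝ := b ^ k with hc
  have hc0 : (0:ℝ) < c := pow_pos hb0 k
  have hc1 : (1:ℝ) ≤ c := one_le_pow₀ hb.le
  set e : ℝ := c⁻¹ with he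
  have he0 : (0:ℝ) < e := inv_pos.2 hc0
  have he1 : e ≤ 1 := inv_le_one_of_one_le₀ hc1
  set G : ℝ → ℝ := fun u => ω' u / u with hG
  have hGiv : IntervalIntegrable G volume 0 1 :=
    (intervalIntegrable_iff_integrableOn_Ioc_of_le zero_le_one).2 hint
  -- equality of the integrand with c * G (c * s) on Ioc 0 e
  have heq1 : ∀ s ∈ Ioc (0:ℝ) e, ω' (min (c * s) 1) / s = c * G (c * s) := by
    intro s hs
    have hs0 : 0 < s := hs.1
    have hcs : c * s ≤ 1 := by
      rw [← mul_inv_cancel₀ hc0.ne']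
      exact mul_le_mul_of_nonneg_left hs.2 hc0.le
    have : min (c * s) 1 = c * s := min_eq_left hcs
    rw [this, hG]
    field_simp
  have h1iv : IntervalIntegrable (fun x => c * G (c * x)) volume 0 e := by
    have := (hGiv.comp_mul_left (c := c) enorm_ne_top enorm_ne_top).const_mul c
    simpa [he, zero_div, one_div] using this
  have hI1 : IntegrableOn (fun s => ω' (min (c * s) 1) / s) (Ioc 0 e) := by
    have := (intervalIntegrable_iff_integrableOn_Ioc_of_le he0.le).1 h1iv
    exact this.congr_fun (fun s hs => (heq1 s hs).symm) measurableSet_Ioc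
  have hE1 : ∫ s in Ioc (0:ℝ) e, ω' (min (c * s) 1) / s = ∫ s in Ioc (0:ℝ) 1, G s := by
    rw [setIntegral_congr_fun measurableSet_Ioc heq1]
    rw [← intervalIntegral.integral_of_le he0.le, ← intervalIntegral.integral_of_le zero_le_one]
    rw [intervalIntegral.integral_const_mul, intervalIntegral.integral_comp_mul_left G hc0.ne']
    rw [mul_zero, mul_inv_cancel₀ hc0.ne']
    rw [smul_eq_mul, ← mul_assoc, mul_inv_cancel₀ hc0.ne', one_mul]
  -- second part
  have hmeas : Measurable (fun s => ω' (min (c * s) 1) / s) :=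
    (hmono.measurable.comp ((measurable_id.const_mul c).min measurable_const)).div measurable_id
  have hinv_int : IntegrableOn (fun s => ω' 1 / s) (Ioc e 1) := by
    apply (ContinuousOn.integrableOn_Icc ?_).mono_set Ioc_subset_Icc_self
    exact continuousOn_const.div continuousOn_id
      (fun x hx => ne_of_gt (lt_of_lt_of_le he0 hx.1))
  have h2bound : ∀ s ∈ Ioc e 1, ω' (min (c * s) 1) / s ≤ ω' 1 / s := by
    intro s hs
    have hs0 : 0 < s := lt_of_lt_of_le he0 hs.1.le
    gcongr
    exact hmono (min_le_right _ _)
  have hI2 : IntegrableOn (fun s => ω' (min (c * s) 1) / s) (Ioc e 1) := by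
    apply hinv_int.mono' hmeas.aestronglyMeasurable
    filter_upwards [ae_restrict_mem measurableSet_Ioc] with s hs
    have hs0 : 0 < s := lt_of_lt_of_le he0 hs.1.le
    rw [Real.norm_eq_abs, abs_of_nonneg (div_nonneg (hnn _) hs0.le)]
    exact h2bound s hs
  have h2le : ∫ s in Ioc e 1, ω' (min (c * s) 1) / s ≤ ∫ s in Ioc e 1, ω' 1 / s :=
    setIntegral_mono_on hI2 hinv_int measurableSet_Ioc h2bound
  have h2val : ∫ s in Ioc e 1, ω' 1 / s = ω' 1 * (k * Real.log b) := by
    rw [← intervalIntegral.integral_of_le he1]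
    have : ∀ x : ℝ, ω' 1 / x = ω' 1 * (1 / x) := fun x => by ring
    simp_rw [this]
    have h0mem : (0:ℝ) ∉ uIcc e 1 := notMem_uIcc_of_lt he0 one_pos
    rw [intervalIntegral.integral_const_mul, integral_one_div h0mem]
    rw [one_div, he, inv_inv, hc, Real.log_pow]
  have hunion : Ioc (0:ℝ) e ∪ Ioc e 1 = Ioc 0 1 := Ioc_union_Ioc_eq_Ioc he0.le he1
  have hIall : IntegrableOn (fun s => ω' (min (c * s) 1) / s) (Ioc 0 1) := by
    rw [← hunion]; exact hI1.union hI2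
  refine ⟨hIall, ?_⟩
  have hdisj : Disjoint (Ioc (0:ℝ) e) (Ioc e 1) := Ioc_disjoint_Ioc_of_le le_rfl
  calc ∫ s in Ioc (0:ℝ) 1, ω' (min (c * s) 1) / s
      = (∫ s in Ioc (0:ℝ) e, ω' (min (c * s) 1) / s) + ∫ s in Ioc e 1, ω' (min (c * s) 1) / s := by
        rw [← hunion, setIntegral_union hdisj measurableSet_Ioc hI1 hI2]
    _ ≤ (∫ s in Ioc (0:ℝ) 1, G s) + ω' 1 * (k * Real.log b) := by
        rw [hE1]; exact add_le_add_right (h2le.trans h2val.le) _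
    _ = (∫ s in Ioc (0:ℝ) 1, ω' s / s) + ω' 1 * (k * Real.log b) := rfl

theorem stmt9 (a b : ℝ) (ha : a ∈ Ioo (0:ℝ) 1) (hb : 1 < b) (hab : 1 < a * b)
    (ω : ℝ → ℝ) (hmono : MonotoneOn ω (Ici 0)) (hnonneg : ∀ t, 0 ≤ t → 0 ≤ ω t)
    (hbdd : ∃ M, ∀ t, 0 ≤ t → ω t ≤ M) (h0 : ω 0 = 0)
    (hint : IntegrableOn (fun s => ω s / s) (Ioc 0 1)) :
    IntegrableOn
      (fun s => (∑' k : ℕ, a ^ k * ω (min (b ^ k * s) 1)) / s) (Ioc 0 1) := by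
  obtain ⟨ha0, ha1⟩ := ha
  have hb0 : (0:ℝ) < b := lt_trans one_pos hb
  set ω' : ℝ → ℝ := fun t => ω (max t 0) with hω'def
  have hω'mono : Monotone ω' := fun s t hst =>
    hmono (le_max_right s 0) (le_max_right t 0) (max_le_max hst le_rfl)
  have hω'nn : ∀ t, 0 ≤ ω' t := fun t => hnonneg _ (le_max_right _ _)
  have hω'eq : ∀ t, 0 ≤ t → ω' t = ω t := fun t ht => by
    simp only [hω'def, max_eq_left ht]
  have hint' : IntegrableOn (fun s => ω' s / s) (Ioc 0 1) :=
    hint.congr_fun (fun s hs => by rw [hω'eq s hs.1.le]) measurableSet_Ioc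
  have key := fun k : ℕ => core9 b hb ω' hω'mono hω'nn hint' k
  -- notation
  set C : ℝ := ∫ s in Ioc (0:ℝ) 1, ω' s / s with hC
  set L : ℝ := ω' 1 * Real.log b with hL
  have hCnn : 0 ≤ C := setIntegral_nonneg measurableSet_Ioc
    (fun s hs => div_nonneg (hω'nn s) hs.1.le)
  have hLnn : 0 ≤ L := mul_nonneg (hω'nn 1) (Real.log_nonneg hb.le)
  set f : ℕ → ℝ → ℝ := fun k s => a ^ k * (ω' (min (b ^ k * s) 1) / s) with hf
  have hfmeas : ∀ k, Measurable (f k) := fun k =>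
    ((hω'mono.measurable.comp ((measurable_id.const_mul (b ^ k)).min
      measurable_const)).div measurable_id).const_mul _
  have hfnn : ∀ k, ∀ s ∈ Ioc (0:ℝ) 1, 0 ≤ f k s := fun k s hs =>
    mul_nonneg (pow_nonneg ha0.le k) (div_nonneg (hω'nn _) hs.1.le)
  have hfint : ∀ k, IntegrableOn (f k) (Ioc 0 1) := fun k => (key k).1.const_mul _
  set B : ℕ → ℝ := fun k => a ^ k * (C + k * L) with hB
  have hBnn : ∀ k, 0 ≤ B k := fun k => mul_nonneg (pow_nonneg ha0.le k)
    (add_nonneg hCnn (mul_nonneg (Nat.cast_nonneg k) hLnn))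
  have hIle : ∀ k, ∫ s in Ioc (0:ℝ) 1, f k s ≤ B k := by
    intro k
    rw [hf]
    simp only
    rw [integral_const_mul]
    refine mul_le_mul_of_nonneg_left ?_ (pow_nonneg ha0.le k)
    have := (key k).2
    calc ∫ s in Ioc (0:ℝ) 1, ω' (min (b ^ k * s) 1) / s ≤ C + ω' 1 * (k * Real.log b) := this
      _ = C + k * L := by rw [hL]; ring
  have hBsum : Summable B := by
    have h1 : Summable (fun k : ℕ => a ^ k) := summable_geometric_of_lt_one ha0.le ha1
    have h2 : Summable (fun k : ℕ => (k : ℝ) * a ^ k) := by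
      have := summable_pow_mul_geometric_of_norm_lt_one 1
        (r := a) (by rwa [Real.norm_eq_abs, abs_of_pos ha0])
      simpa [pow_one] using this
    have : Summable (fun k : ℕ => C * a ^ k + L * ((k : ℝ) * a ^ k)) :=
      (h1.mul_left C).add (h2.mul_left L)
    exact this.congr (fun k => by rw [hB]; ring)
  -- the ENNReal-valued majorant
  set F : ℝ → ENNReal := fun s => ∑' k, ENNReal.ofReal (f k s) with hF
  have hFmeas : Measurable F :=
    Measurable.ennreal_tsum (fun k => (hfmeas k).ennreal_ofReal)
  have hTF : ∀ s ∈ Ioc (0:ℝ) 1,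
      (∑' k : ℕ, a ^ k * ω (min (b ^ k * s) 1)) / s = (F s).toReal := by
    intro s hs
    have hs0 : 0 < s := hs.1
    have hmin : ∀ k : ℕ, (0:ℝ) ≤ min (b ^ k * s) 1 :=
      fun k => le_min (mul_nonneg (pow_nonneg hb0.le k) hs0.le) zero_le_one
    have hterm : ∀ k : ℕ, a ^ k * ω (min (b ^ k * s) 1) = a ^ k * ω' (min (b ^ k * s) 1) :=
      fun k => by rw [hω'eq _ (hmin k)]
    rw [tsum_congr hterm, ← tsum_div_const]
    have hfeq : (fun k : ℕ => a ^ k * ω' (min (b ^ k * s) 1) / s) = fun k => f k s := by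
      funext k; rw [hf]; ring
    rw [hfeq]
    by_cases hsum : Summable (fun k => f k s)
    · rw [hF]
      simp only
      rw [← ENNReal.ofReal_tsum_of_nonneg (fun k => hfnn k s hs) hsum,
        ENNReal.toReal_ofReal (tsum_nonneg (fun k => hfnn k s hs))]
    · rw [tsum_eq_zero_of_not_summable hsum]
      have hFtop : F s = ⊤ := by
        by_contra hne
        apply hsum
        have := ENNReal.summable_toReal (hF ▸ hne)
        refine this.congr (fun k => ?_)
        rw [ENNReal.toReal_ofReal (hfnn k s hs)]
      rw [hFtop, ENNReal.toReal_top]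
  constructor
  · refine (hFmeas.ennreal_toReal.aestronglyMeasurable).congr ?_
    filter_upwards [ae_restrict_mem measurableSet_Ioc] with s hs
    exact (hTF s hs).symm
  · rw [hasFiniteIntegral_iff_norm]
    calc ∫⁻ s in Ioc (0:ℝ) 1, ENNReal.ofReal ‖(∑' k : ℕ, a ^ k * ω (min (b ^ k * s) 1)) / s‖
        ≤ ∫⁻ s in Ioc (0:ℝ) 1, F s := by
          refine lintegral_mono_ae ?_
          filter_upwards [ae_restrict_mem measurableSet_Ioc] with s hs
          rw [hTF s hs, Real.norm_eq_abs, abs_of_nonneg ENNReal.toReal_nonneg]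
          exact ENNReal.ofReal_toReal_le
      _ = ∑' k, ∫⁻ s in Ioc (0:ℝ) 1, ENNReal.ofReal (f k s) := by
          rw [hF]
          exact lintegral_tsum (fun k => ((hfmeas k).ennreal_ofReal).aemeasurable)
      _ ≤ ∑' k, ENNReal.ofReal (B k) := by
          refine ENNReal.tsum_le_tsum (fun k => ?_)
          rw [← ofReal_integral_eq_lintegral_ofReal (hfint k) ?_]
          · exact ENNReal.ofReal_le_ofReal (hIle k)
          · filter_upwards [ae_restrict_mem measurableSet_Ioc] with s hs
            exact hfnn k s hs
      _ = ENNReal.ofReal (∑' k, B k) := (ENNReal.ofReal_tsum_of_nonneg hBnn hBsum).symm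
      _ < ⊤ := ENNReal.ofReal_lt_top
end
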